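/- If a and a′ are 2-friezes of height 3 such that a(i,j) = a′(i,j) for all i ∈ {0,1} and all j ∈ {1,2,3}, then a = a′. In other words, a 2-frieze of height 3 is uniquely determined by the six entries in two adjacent columns. -/

import Mathlib

/-- A 2-frieze of height `h`: a function `a : ℤ × {0,…,h+1} → ℤ` with `a(i,0) = a(i,h+1) = 1`,
`a(i,j) ≥ 1` for `1 ≤ j ≤ h`, and `a(i,j) = a(i-1,j)·a(i+1,j) - a(i,j-1)·a(i,j+1)`
for `1 ≤ j ≤ h`. -/
def Is2Frieze (h : ℕ) (a : ℤ → Fin (h + 2) → ℤ) : Prop :=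
  (∀ i : ℤ, a i ⟨0, by omega⟩ = 1) ∧
  (∀ i : ℤ, a i ⟨h + 1, by omega⟩ = 1) ∧
  (∀ i : ℤ, ∀ j : ℕ, ∀ _ : 1 ≤ j, ∀ _ : j ≤ h, 1 ≤ a i ⟨j, by omega⟩) ∧
  (∀ i : ℤ, ∀ j : ℕ, ∀ _ : 1 ≤ j, ∀ _ : j ≤ h,
    a i ⟨j, by omega⟩ =
      a (i - 1) ⟨j, by omega⟩ * a (i + 1) ⟨j, by omega⟩ -
        a i ⟨j - 1, by omega⟩ * a i ⟨j + 1, by omega⟩)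

theorem statement13 (a a' : ℤ → Fin 5 → ℤ) (ha : Is2Frieze 3 a) (ha' : Is2Frieze 3 a')
    (hagree : ∀ i : ℤ, (i = 0 ∨ i = 1) → ∀ j : Fin 5,
      ((j : ℕ) = 1 ∨ (j : ℕ) = 2 ∨ (j : ℕ) = 3) → a i j = a' i j) :
    a = a' := by
  obtain ⟨hb0, hb4, hpos, hrec⟩ := ha
  obtain ⟨hb0', hb4', hpos', hrec'⟩ := ha'
  -- forward propagation
  have fwd : ∀ i : ℤ, (∀ j, a i j = a' i j) → (∀ j, a (i+1) j = a' (i+1) j) →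
      ∀ j, a (i+2) j = a' (i+2) j := by
    intro i h0 h1 j
    have e : ∀ j : ℕ, ∀ _hj1 : 1 ≤ j, ∀ _hj3 : j ≤ 3,
        a (i+2) ⟨j, by omega⟩ = a' (i+2) ⟨j, by omega⟩ := by
      intro j hj1 hj3
      have r := hrec (i+1) j hj1 hj3
      have r' := hrec' (i+1) j hj1 hj3
      simp only [show i+1-1 = i from by ring, show i+1+1 = i+2 from by ring] at r r'
      simp only [h0, h1] at r
      have hne : a' i ⟨j, by omega⟩ ≠ 0 := by
        have := hpos' i j hj1 hj3; omega
      have key : a' i ⟨j, by omega⟩ * a (i+2) ⟨j, by omega⟩ =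
          a' i ⟨j, by omega⟩ * a' (i+2) ⟨j, by omega⟩ := by linarith
      exact mul_left_cancel₀ hne key
    obtain ⟨jv, hjv⟩ := j
    interval_cases jv
    · rw [hb0, hb0']
    · exact e 1 (by norm_num) (by norm_num)
    · exact e 2 (by norm_num) (by norm_num)
    · exact e 3 (by norm_num) (by norm_num)
    · exact (hb4 (i+2)).trans (hb4' (i+2)).symm
  -- backward propagation
  have bwd : ∀ i : ℤ, (∀ j, a (i+1) j = a' (i+1) j) → (∀ j, a (i+2) j = a' (i+2) j) →
      ∀ j, a i j = a' i j := by
    intro i h1 h2 j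
    have e : ∀ j : ℕ, ∀ _hj1 : 1 ≤ j, ∀ _hj3 : j ≤ 3,
        a i ⟨j, by omega⟩ = a' i ⟨j, by omega⟩ := by
      intro j hj1 hj3
      have r := hrec (i+1) j hj1 hj3
      have r' := hrec' (i+1) j hj1 hj3
      simp only [show i+1-1 = i from by ring, show i+1+1 = i+2 from by ring] at r r'
      simp only [h2, h1] at r
      have hne : a' (i+2) ⟨j, by omega⟩ ≠ 0 := by
        have := hpos' (i+2) j hj1 hj3; omega
      have key : a i ⟨j, by omega⟩ * a' (i+2) ⟨j, by omega⟩ =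
          a' i ⟨j, by omega⟩ * a' (i+2) ⟨j, by omega⟩ := by linarith
      exact mul_right_cancel₀ hne key
    obtain ⟨jv, hjv⟩ := j
    interval_cases jv
    · rw [hb0, hb0']
    · exact e 1 (by norm_num) (by norm_num)
    · exact e 2 (by norm_num) (by norm_num)
    · exact e 3 (by norm_num) (by norm_num)
    · exact (hb4 i).trans (hb4' i).symm
  -- base columns
  have col : ∀ i : ℤ, i = 0 ∨ i = 1 → ∀ j, a i j = a' i j := by
    intro i hi j
    obtain ⟨jv, hjv⟩ := j
    interval_cases jv
    · rw [hb0, hb0']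
    · exact hagree i hi _ (by norm_num)
    · exact hagree i hi _ (by norm_num)
    · exact hagree i hi _ (by norm_num)
    · exact (hb4 i).trans (hb4' i).symm
  have main : ∀ i : ℤ, (∀ j, a i j = a' i j) ∧ (∀ j, a (i+1) j = a' (i+1) j) := by
    intro i
    induction i using Int.induction_on with
    | zero => exact ⟨col 0 (Or.inl rfl), col 1 (Or.inr (by norm_num))⟩
    | succ k ih =>
      refine ⟨ih.2, ?_⟩
      have := fwd k ih.1 ih.2
      simpa [show ((k:ℤ)+1+1) = (k:ℤ)+2 from by ring] using this
    | pred k ih =>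
      have h1 : ∀ j, a (-(k:ℤ)-1+1) j = a' (-(k:ℤ)-1+1) j := by
        simpa [show (-(k:ℤ)-1+1) = -(k:ℤ) from by ring] using ih.1
      have h2 : ∀ j, a (-(k:ℤ)-1+2) j = a' (-(k:ℤ)-1+2) j := by
        simpa [show (-(k:ℤ)-1+2) = -(k:ℤ)+1 from by ring] using ih.2
      have := bwd (-(k:ℤ)-1) h1 h2
      constructor
      · simpa [show (-((k:ℤ)+1)) = -(k:ℤ)-1 from by ring] using this
      · simpa [show (-((k:ℤ)+1)+1) = -(k:ℤ)-1+1 from by ring] using h1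
  funext i j
  exact (main i).1 j
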